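/- Let p ∈ ℝ² and let λ ⊂ ℝ² be a line. If a1, a2, a3 ∈ λ are three distinct points, then no line of the form ℓ_{x,y} (x,y ∈ ℝ²) intersects all three lines ℓ_{p,a1}, ℓ_{p,a2}, ℓ_{p,a3} in ℝ³. Equivalently, there is no pair (x,y) and no triple of rotations g1,g2,g3 with gi(p) = ai and gi(x) = y for each i. -/

import Mathlib

open Real

/-- Rotation of the plane `ℂ` around center `O` by angle `α`. -/
noncomputable def rot (O : ℂ) (α : ℝ) : ℂ → ℂ :=
  fun z => O + Complex.exp (α * Complex.I) * (z - O)

/-- The line `ℓ_{p,q}`: the set of parametrized rotations `ρ(g) = (o_x,o_y,cot(α/2))`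
taking `p` to `q`. -/
noncomputable def rotSet (p q : ℂ) : Set (ℝ × ℝ × ℝ) :=
  {v | ∃ (O : ℂ) (α : ℝ), 0 < α ∧ α < 2 * π ∧ rot O α p = q ∧
    v = (O.re, O.im, Real.cot (α / 2))}

lemma cot_injOn_aux : Set.InjOn Real.cot (Set.Ioo 0 π) := by
  rintro a ⟨ha0, haπ⟩ b ⟨hb0, hbπ⟩ h
  have hsa : Real.sin a > 0 := Real.sin_pos_of_pos_of_lt_pi ha0 haπ
  have hsb : Real.sin b > 0 := Real.sin_pos_of_pos_of_lt_pi hb0 hbπ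
  have h' : Real.cos a * Real.sin b = Real.cos b * Real.sin a := by
    rw [Real.cot_eq_cos_div_sin, Real.cot_eq_cos_div_sin] at h
    field_simp at h
    linarith [h]
  have hs : Real.sin (a - b) = 0 := by
    rw [Real.sin_sub]; linarith [h']
  have := (Real.sin_eq_zero_iff_of_lt_of_lt (by linarith) (by linarith)).1 hs
  linarith

lemma rot_isom (O : ℂ) (α : ℝ) (z w : ℂ) :
    ‖rot O α z - rot O α w‖ = ‖z - w‖ := by
  have : rot O α z - rot O α w = Complex.exp (α * Complex.I) * (z - w) := by
    simp [rot]; ring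
  rw [this, norm_mul, Complex.norm_exp_ofReal_mul_I, one_mul]

lemma dist_eq_aux (x y p a : ℂ) (h : (rotSet x y ∩ rotSet p a).Nonempty) :
    ‖y - a‖ = ‖x - p‖ := by
  obtain ⟨v, ⟨O, α, hα0, hα2, hxy, hv⟩, ⟨O', β, hβ0, hβ2, hpa, hv'⟩⟩ := h
  rw [hv] at hv'
  have hO : O = O' := by
    apply Complex.ext
    · exact congrArg Prod.fst hv'
    · exact congrArg (fun t => t.2.1) hv'
  have hcot : Real.cot (α / 2) = Real.cot (β / 2) :=
    congrArg (fun t => t.2.2) hv'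
  have hαβ : α = β := by
    have := cot_injOn_aux (Set.mem_Ioo.2 ⟨by linarith, by linarith⟩)
      (Set.mem_Ioo.2 ⟨by linarith, by linarith⟩) hcot
    linarith
  rw [← hxy, ← hpa, hO, hαβ]
  exact rot_isom O' β x p

lemma key_aux (w d : ℂ) (s t : ℝ) (hne : s ≠ t)
    (h : ‖w - s * d‖ = ‖w - t * d‖) :
    (s + t) * (d.re * d.re + d.im * d.im) = 2 * (w.re * d.re + w.im * d.im) := by
  have h2 : Complex.normSq (w - s * d) = Complex.normSq (w - t * d) := by
    rw [← Complex.sq_norm, ← Complex.sq_norm, h]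
  simp [Complex.normSq_apply, Complex.sub_re, Complex.sub_im, Complex.mul_re,
    Complex.mul_im, Complex.ofReal_re, Complex.ofReal_im] at h2
  have hst : s - t ≠ 0 := sub_ne_zero.2 hne
  have h3 : (s - t) * ((s + t) * (d.re * d.re + d.im * d.im)
      - 2 * (w.re * d.re + w.im * d.im)) = 0 := by nlinarith [h2]
  rcases mul_eq_zero.1 h3 with h4 | h4
  · exact absurd h4 hst
  · linarith

/-- If `a1, a2, a3` are three distinct collinear points, then no line `ℓ_{x,y}`
intersects all three lines `ℓ_{p,a1}`, `ℓ_{p,a2}`, `ℓ_{p,a3}`; equivalently there is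
no pair `(x,y)` with rotations `gᵢ` satisfying `gᵢ(p) = aᵢ` and `gᵢ(x) = y`. -/
theorem stmt_19 (p a1 a2 a3 : ℂ)
    (h12 : a1 ≠ a2) (h13 : a1 ≠ a3) (h23 : a2 ≠ a3)
    (hcol : ∃ b d : ℂ, d ≠ 0 ∧ (∃ t : ℝ, a1 = b + (t : ℂ) * d) ∧
      (∃ t : ℝ, a2 = b + (t : ℂ) * d) ∧ (∃ t : ℝ, a3 = b + (t : ℂ) * d)) :
    ¬ ∃ x y : ℂ, (rotSet x y ∩ rotSet p a1).Nonempty ∧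
      (rotSet x y ∩ rotSet p a2).Nonempty ∧
      (rotSet x y ∩ rotSet p a3).Nonempty := by
  rintro ⟨x, y, h1, h2, h3⟩
  obtain ⟨b, d, hd, ⟨t1, ht1⟩, ⟨t2, ht2⟩, ⟨t3, ht3⟩⟩ := hcol
  have e1 := dist_eq_aux x y p a1 h1
  have e2 := dist_eq_aux x y p a2 h2
  have e3 := dist_eq_aux x y p a3 h3
  have ne12 : t1 ≠ t2 := fun h => h12 (by rw [ht1, ht2, h])
  have ne13 : t1 ≠ t3 := fun h => h13 (by rw [ht1, ht3, h])
  have ne23 : t2 ≠ t3 := fun h => h23 (by rw [ht2, ht3, h])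
  set w := y - b with hw
  have ya1 : y - a1 = w - t1 * d := by rw [ht1, hw]; ring
  have ya2 : y - a2 = w - t2 * d := by rw [ht2, hw]; ring
  have ya3 : y - a3 = w - t3 * d := by rw [ht3, hw]; ring
  have k12 := key_aux w d t1 t2 ne12 (by rw [← ya1, ← ya2, e1, e2])
  have k13 := key_aux w d t1 t3 ne13 (by rw [← ya1, ← ya3, e1, e3])
  have hdpos : 0 < d.re * d.re + d.im * d.im := by
    have := Complex.normSq_pos.2 hd
    simpa [Complex.normSq_apply] using this
  have : t2 = t3 := by
    have : (t2 - t3) * (d.re * d.re + d.im * d.im) = 0 := by linarith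
    rcases mul_eq_zero.1 this with h | h
    · linarith
    · linarith
  exact ne23 this
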